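/- arXiv:2006.04370 — 3 statements merged into one kernel-verified Lean document; each statement's English description precedes it below -/
import Mathlib

section
/- For each fixed k ∈ ℕ there is L > 0 such that the following holds for all sufficiently large r. There exists a k-graph T with at most L·r vertices, at most L·r edges, and an identified set Z of r vertices, such that for every subset W ⊆ Z with |W| < r/2 for which the number of vertices of T − W is divisible by k, the k-graph T − W (obtained by deleting the vertices of W and all edges meeting W) has a perfect matching. -/
open Finset MeasureTheory Filter

namespace DiracRandom

/-- The degree of a vertex set `S`: the number of edges of `E` containing `S`. -/
def degS {n : ℕ} (E : Finset (Finset (Fin n))) (S : Finset (Fin n)) : ℕ :=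
  (E.filter fun e => S ⊆ e).card

/-- A matching: a family of pairwise disjoint edges. -/
def IsMatching {n : ℕ} (M : Finset (Finset (Fin n))) : Prop :=
  ∀ e ∈ M, ∀ f ∈ M, e ≠ f → Disjoint e f

/-- A perfect matching of the hypergraph with edge set `E` on vertex set `Fin n`. -/
def IsPerfectMatching {n : ℕ} (E M : Finset (Finset (Fin n))) : Prop :=
  M ⊆ E ∧ IsMatching M ∧ ∀ v : Fin n, ∃ e ∈ M, v ∈ e

/-- `mDirac d k n` is `m_d(k,n)`: the smallest `m` such that every `n`-vertex `k`-graph with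
minimum `d`-degree at least `m` has a perfect matching. -/
noncomputable def mDirac (d k n : ℕ) : ℕ :=
  sInf {m : ℕ | ∀ E : Finset (Finset (Fin n)), (∀ e ∈ E, e.card = k) →
    (∀ S : Finset (Fin n), S.card = d → m ≤ degS E S) →
    ∃ M, IsPerfectMatching E M}

/-- Sample space for the random `k`-graph on `n` vertices. -/
abbrev EdgeSpace (n k : ℕ) := {e : Finset (Fin n) // e.card = k} → Bool

/-- Bernoulli measure with parameter `p` (clamped to `[0,1]`). -/
noncomputable def bern (p : ℝ) : Measure Bool :=
  (PMF.bernoulli (min (Real.toNNReal p) 1) (min_le_right _ _)).toMeasure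

instance (p : ℝ) : IsProbabilityMeasure (bern p) := by
  unfold bern; infer_instance

/-- The law of the binomial random `k`-graph `H^k(n,p)`: each `k`-set is an edge
independently with probability `p`. -/
noncomputable def Hk (n k : ℕ) (p : ℝ) : Measure (EdgeSpace n k) :=
  Measure.pi fun _ => bern p

/-- The edge set of an outcome of the random hypergraph. -/
def edgesOf {n k : ℕ} (ω : EdgeSpace n k) : Finset (Finset (Fin n)) :=
  (Finset.univ.filter fun e => ω e = true).image Subtype.val


namespace RT

section Counting

/-- number of elements of `S` that are `≤ t` -/
def cnt (S : Finset ℕ) (t : ℕ) : ℕ := (S.filter (· ≤ t)).card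

def sig (k : ℕ) (S : Finset ℕ) (t : ℕ) : ℕ := cnt S t % k

def phi (k : ℕ) (S : Finset ℕ) (t : ℕ) : ℕ := t - sig k S t

def Qset (k : ℕ) (S : Finset ℕ) : Finset ℕ := S.filter (fun q => cnt S q % k = 0)

def Bad (k : ℕ) (S : Finset ℕ) : Finset ℕ :=
  (Qset k S).biUnion (fun q => Finset.Icc (q + 1 - k) q)

variable {k : ℕ} {S : Finset ℕ}

lemma cnt_mono {a b : ℕ} (h : a ≤ b) : cnt S a ≤ cnt S b := by
  apply card_le_card
  intro x hx
  rw [mem_filter] at hx ⊢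
  exact ⟨hx.1, le_trans hx.2 h⟩

lemma cnt_le (t : ℕ) : cnt S t ≤ t + 1 := by
  have : S.filter (· ≤ t) ⊆ Finset.range (t + 1) := by
    intro x hx; simp only [mem_filter] at hx; simp [Nat.lt_succ_iff, hx.2]
  simpa [cnt] using card_le_card this

lemma cnt_le_of_notmem {t : ℕ} (ht : t ∉ S) : cnt S t ≤ t := by
  have : S.filter (· ≤ t) ⊆ Finset.range t := by
    intro x hx; simp only [mem_filter] at hx
    have : x ≠ t := fun h => ht (h ▸ hx.1)
    simp only [mem_range]; omega
  simpa [cnt] using card_le_card this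

lemma cnt_pos {s : ℕ} (hs : s ∈ S) : 0 < cnt S s :=
  card_pos.2 ⟨s, mem_filter.2 ⟨hs, le_refl s⟩⟩

lemma cnt_lt {q t : ℕ} (hq : q ∈ S) (h : t < q) : cnt S t < cnt S q := by
  apply card_lt_card
  have hsub : S.filter (· ≤ t) ⊆ S.filter (· ≤ q) := by
    intro x hx
    rw [mem_filter] at hx ⊢
    exact ⟨hx.1, le_trans hx.2 (le_of_lt h)⟩
  refine (Finset.ssubset_iff_of_subset hsub).2 ⟨q, mem_filter.2 ⟨hq, le_refl q⟩, ?_⟩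
  intro hmem
  rw [mem_filter] at hmem
  omega

lemma cnt_sub_le {a b : ℕ} (h : a ≤ b) : cnt S b ≤ cnt S a + (b - a) := by
  have hsub : S.filter (· ≤ b) ⊆ S.filter (· ≤ a) ∪ Finset.Ioc a b := by
    intro x hx; simp only [mem_filter] at hx
    rcases le_or_gt x a with h1 | h1
    · exact mem_union_left _ (mem_filter.2 ⟨hx.1, h1⟩)
    · exact mem_union_right _ (mem_Ioc.2 ⟨h1, hx.2⟩)
  calc cnt S b ≤ (S.filter (· ≤ a) ∪ Finset.Ioc a b).card := card_le_card hsub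
    _ ≤ cnt S a + (Finset.Ioc a b).card := card_union_le _ _
    _ = cnt S a + (b - a) := by rw [Nat.card_Ioc]

lemma cnt_sub_lt {a b : ℕ} (h : a < b) (hb : b ∉ S) : cnt S b + 1 ≤ cnt S a + (b - a) := by
  have hsub : S.filter (· ≤ b) ⊆ S.filter (· ≤ a) ∪ Finset.Ioo a b := by
    intro x hx; simp only [mem_filter] at hx
    rcases le_or_gt x a with h1 | h1
    · exact mem_union_left _ (mem_filter.2 ⟨hx.1, h1⟩)
    · have : x ≠ b := fun hxe => hb (hxe ▸ hx.1)
      exact mem_union_right _ (mem_Ioo.2 ⟨h1, by omega⟩)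
  have := card_le_card hsub
  have h2 := card_union_le (S.filter (· ≤ a)) (Finset.Ioo a b)
  rw [Nat.card_Ioo] at h2
  have : cnt S b ≤ cnt S a + (b - a - 1) := le_trans this h2
  omega

variable (hk : 0 < k)
include hk

lemma sig_lt (t : ℕ) : sig k S t < k := Nat.mod_lt _ hk

lemma sig_le {t : ℕ} (ht : t ∉ S) : sig k S t ≤ t :=
  le_trans (Nat.mod_le _ _) (cnt_le_of_notmem ht)

lemma phi_inj {t t' : ℕ} (ht : t ∉ S) (ht' : t' ∉ S)
    (h : phi k S t = phi k S t') : t = t' := by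
  -- wlog t ≤ t'
  have key : ∀ a b : ℕ, a ∉ S → b ∉ S → a ≤ b → phi k S a = phi k S b → a = b := by
    intro a b ha hb hab heq
    by_contra hne
    have hab' : a < b := lt_of_le_of_ne hab hne
    have h1 : sig k S a ≤ a := sig_le hk ha
    have h2 : sig k S b ≤ b := sig_le hk hb
    have h3 : sig k S a < k := sig_lt hk a
    have h4 : sig k S b < k := sig_lt hk b
    have hD : sig k S b = sig k S a + (b - a) := by
      unfold phi at heq; omega
    have hmono : cnt S a ≤ cnt S b := cnt_mono (le_of_lt hab')
    have hlt : cnt S b + 1 ≤ cnt S a + (b - a) := cnt_sub_lt hab' hb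
    set d := cnt S b - cnt S a with hd
    have hcb : cnt S b = cnt S a + d := by omega
    have hdlt : d < b - a := by omega
    have hba : b - a < k := by omega
    have : sig k S b = sig k S a + d := by
      have hda : d % k = d := Nat.mod_eq_of_lt (by omega)
      have hlt2 : sig k S a + d < k := by omega
      show cnt S b % k = sig k S a + d
      rw [hcb, Nat.add_mod, hda]
      exact Nat.mod_eq_of_lt hlt2
    omega
  rcases le_total t t' with hle | hle
  · exact key t t' ht ht' hle h
  · exact (key t' t ht' ht hle h.symm).symm

lemma mod_sub_mod {a e : ℕ} (ha : a % k = 0) (h1 : 0 < e) (h2 : e < k) (h3 : e ≤ a) :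
    (a - e) % k = k - e := by
  obtain ⟨g, rfl⟩ := Nat.dvd_of_mod_eq_zero ha
  have hg : 1 ≤ g := by
    rcases Nat.eq_zero_or_pos g with h | h
    · subst h; simp at h3; omega
    · exact h
  obtain ⟨g', rfl⟩ : ∃ g', g = g' + 1 := ⟨g - 1, by omega⟩
  have : k * (g' + 1) - e = k * g' + (k - e) := by
    rw [Nat.mul_succ]; omega
  rw [this, Nat.mul_add_mod]
  exact Nat.mod_eq_of_lt (by omega)

lemma phi_not_bad {t : ℕ} (ht : t ∉ S) : phi k S t ∉ Bad k S := by
  intro hmem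
  rw [Bad, mem_biUnion] at hmem
  obtain ⟨q, hq, hIcc⟩ := hmem
  rw [mem_Icc] at hIcc
  have hqS : q ∈ S := mem_filter.1 hq |>.1
  have hq0 : cnt S q % k = 0 := (mem_filter.1 hq).2
  have hphile : phi k S t ≤ t := Nat.sub_le _ _
  have hsiglt : sig k S t < k := sig_lt hk t
  have hsigle : sig k S t ≤ t := sig_le hk ht
  have hphit : phi k S t = t - sig k S t := rfl
  rcases lt_trichotomy t q with hlt | heq | hgt
  · -- t < q : show contradiction with lower bound
    have hu : q - t ≤ k - 1 := by omega
    have he1 : cnt S t < cnt S q := cnt_lt hqS hlt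
    have he2 : cnt S q ≤ cnt S t + (q - t) := cnt_sub_le (le_of_lt hlt)
    set e := cnt S q - cnt S t with he
    have he3 : 1 ≤ e := by omega
    have he4 : e ≤ q - t := by omega
    have hsig : sig k S t = k - e := by
      unfold sig
      have : cnt S t = cnt S q - e := by omega
      rw [this]
      exact mod_sub_mod hk hq0 (by omega) (by omega) (by omega)
    omega
  · exact ht (heq ▸ hqS)
  · -- q < t
    have hu1 : 1 ≤ t - q := by omega
    have hsigge : t - q ≤ sig k S t := by omega
    have he1 : cnt S q ≤ cnt S t := cnt_mono (le_of_lt hgt)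
    have he2 : cnt S t + 1 ≤ cnt S q + (t - q) := cnt_sub_lt hgt ht
    set e := cnt S t - cnt S q with he
    have he4 : e ≤ t - q - 1 := by omega
    have hsig : sig k S t = e := by
      unfold sig
      have : cnt S t = cnt S q + e := by omega
      rw [this, Nat.add_mod, hq0]
      simp
      exact Nat.mod_eq_of_lt (by omega)
    omega

lemma qset_ge {q : ℕ} (hq : q ∈ Qset k S) : k - 1 ≤ q := by
  have hqS : q ∈ S := (mem_filter.1 hq).1
  have h0 : cnt S q % k = 0 := (mem_filter.1 hq).2
  have h1 : 0 < cnt S q := cnt_pos hqS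
  have h2 : k ≤ cnt S q := by
    rcases Nat.dvd_of_mod_eq_zero h0 with ⟨g, hg⟩
    rcases Nat.eq_zero_or_pos g with h | h
    · subst h; simp at hg; omega
    · calc k = k * 1 := by ring
        _ ≤ k * g := Nat.mul_le_mul_left _ h
        _ = cnt S q := hg.symm
  have := cnt_le (S := S) q
  omega

lemma qset_gap {q q' : ℕ} (hq : q ∈ Qset k S) (hq' : q' ∈ Qset k S) (h : q < q') :
    q + k ≤ q' := by
  have hqS : q ∈ S := (mem_filter.1 hq).1
  have hq'S : q' ∈ S := (mem_filter.1 hq').1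
  have h0 : cnt S q % k = 0 := (mem_filter.1 hq).2
  have h0' : cnt S q' % k = 0 := (mem_filter.1 hq').2
  have h1 : cnt S q < cnt S q' := cnt_lt hq'S h
  have h2 : cnt S q' ≤ cnt S q + (q' - q) := cnt_sub_le (le_of_lt h)
  have h3 : k ∣ cnt S q' - cnt S q := by
    have d1 := Nat.dvd_of_mod_eq_zero h0
    have d2 := Nat.dvd_of_mod_eq_zero h0'
    exact Nat.dvd_sub d2 d1
  have h4 : k ≤ cnt S q' - cnt S q := Nat.le_of_dvd (by omega) h3
  omega

lemma image_cnt : S.image (cnt S) = Finset.Icc 1 S.card := by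
  have hinj : Set.InjOn (cnt S) S := by
    intro a ha b hb hab
    by_contra hne
    rcases lt_or_gt_of_ne hne with h | h
    · exact absurd hab (ne_of_lt (cnt_lt hb h))
    · exact absurd hab.symm (ne_of_lt (cnt_lt ha h))
  apply eq_of_subset_of_card_le
  · intro x hx
    obtain ⟨s, hs, rfl⟩ := mem_image.1 hx
    rw [mem_Icc]
    exact ⟨cnt_pos hs, card_filter_le _ _⟩
  · rw [Nat.card_Icc, card_image_of_injOn hinj]
    omega

lemma qset_card (hdvd : k ∣ S.card) : (Qset k S).card * k = S.card := by
  obtain ⟨m, hm⟩ := hdvd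
  have hinj : Set.InjOn (cnt S) (Qset k S) := by
    intro a ha b hb hab
    by_contra hne
    have haS : a ∈ S := (mem_filter.1 ha).1
    have hbS : b ∈ S := (mem_filter.1 hb).1
    rcases lt_or_gt_of_ne hne with h | h
    · exact absurd hab (ne_of_lt (cnt_lt hbS h))
    · exact absurd hab.symm (ne_of_lt (cnt_lt haS h))
  have h1 : (Qset k S).image (cnt S) = (Finset.Icc 1 S.card).filter (fun c => c % k = 0) := by
    rw [← image_cnt hk, filter_image]
    rfl
  have h2 : (Finset.Icc 1 (k * m)).filter (fun c => c % k = 0)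
      = (Finset.Icc 1 m).image (fun b => k * b) := by
    ext a
    simp only [mem_filter, mem_Icc, mem_image]
    constructor
    · rintro ⟨⟨ha1, ha2⟩, ha3⟩
      obtain ⟨b, rfl⟩ := Nat.dvd_of_mod_eq_zero ha3
      refine ⟨b, ⟨?_, ?_⟩, rfl⟩
      · rcases Nat.eq_zero_or_pos b with rfl | hb
        · simp at ha1
        · exact hb
      · exact Nat.le_of_mul_le_mul_left ha2 hk
    · rintro ⟨b, ⟨hb1, hb2⟩, rfl⟩
      refine ⟨⟨?_, Nat.mul_le_mul_left _ hb2⟩, Nat.mul_mod_right _ _⟩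
      exact Nat.succ_le_of_lt (Nat.mul_pos hk hb1)
  have h3 : (Qset k S).card = m := by
    rw [← card_image_of_injOn hinj, h1, hm, h2,
      card_image_of_injective _ (fun a b hab => Nat.eq_of_mul_eq_mul_left hk hab),
      Nat.card_Icc]
    omega
  rw [h3, hm]; ring

lemma bad_subset {r : ℕ} (hS : S ⊆ Finset.range r) : Bad k S ⊆ Finset.range r := by
  intro x hx
  rw [Bad, mem_biUnion] at hx
  obtain ⟨q, hq, hIcc⟩ := hx
  rw [mem_Icc] at hIcc
  have : q ∈ S := (mem_filter.1 hq).1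
  have := hS this
  rw [mem_range] at *
  omega

lemma bad_card (hdvd : k ∣ S.card) : (Bad k S).card = S.card := by
  rw [Bad, card_biUnion]
  · have : ∀ q ∈ Qset k S, (Finset.Icc (q + 1 - k) q).card = k := by
      intro q hq
      have := qset_ge hk hq
      rw [Nat.card_Icc]; omega
    rw [Finset.sum_congr rfl this, Finset.sum_const, smul_eq_mul, mul_comm,
      ← qset_card hk hdvd, mul_comm]
  · intro q hq q' hq' hne
    rcases lt_or_gt_of_ne hne with h | h
    · have := qset_gap hk hq hq' h
      rw [Function.onFun, Finset.disjoint_left]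
      intro x hx hx'
      rw [mem_Icc] at hx hx'; omega
    · have := qset_gap hk hq' hq h
      rw [Function.onFun, Finset.disjoint_left]
      intro x hx hx'
      rw [mem_Icc] at hx hx'; omega

lemma phi_image {r : ℕ} (hS : S ⊆ Finset.range r) (hdvd : k ∣ S.card) :
    (Finset.range r \ S).image (phi k S) = Finset.range r \ Bad k S := by
  apply eq_of_subset_of_card_le
  · intro x hx
    obtain ⟨t, ht, rfl⟩ := mem_image.1 hx
    rw [Finset.mem_sdiff] at ht ⊢
    have htS : t ∉ S := ht.2
    refine ⟨?_, phi_not_bad hk htS⟩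
    rw [mem_range] at *
    have : phi k S t ≤ t := Nat.sub_le _ _
    omega
  · have hinj : Set.InjOn (phi k S) ((Finset.range r \ S : Finset ℕ) : Set ℕ) := by
      intro a ha b hb hab
      rw [coe_sdiff, Set.mem_diff] at ha hb
      exact phi_inj hk ha.2 hb.2 hab
    rw [card_image_of_injOn hinj, card_sdiff_of_subset hS, card_sdiff_of_subset (bad_subset hk hS),
      bad_card hk hdvd, card_range]

end Counting

section Hypergraph

lemma encode_lt {k r i j : ℕ} (hi : i < r) (hj : j < k) : i * k + j < r * k := by
  calc i * k + j < i * k + k := by omega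
    _ = (i + 1) * k := by ring
    _ ≤ r * k := Nat.mul_le_mul_right _ (by omega)

def vtx (k r : ℕ) (h : 0 < r * k) (i j : ℕ) : Fin (r * k) :=
  ⟨(i * k + j) % (r * k), Nat.mod_lt _ h⟩

lemma vtx_val {k r : ℕ} (h : 0 < r * k) {i j : ℕ} (hi : i < r) (hj : j < k) :
    (vtx k r h i j).val = i * k + j := Nat.mod_eq_of_lt (encode_lt hi hj)

lemma vtx_inj {k r : ℕ} (h : 0 < r * k) {i j i' j' : ℕ} (hi : i < r) (hj : j < k)
    (hi' : i' < r) (hj' : j' < k) (heq : vtx k r h i j = vtx k r h i' j') :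
    i = i' ∧ j = j' := by
  have hv : i * k + j = i' * k + j' := by
    have := congrArg Fin.val heq
    rwa [vtx_val h hi hj, vtx_val h hi' hj'] at this
  have h1 : (i * k + j) % k = j := by
    rw [Nat.add_mod, Nat.mul_mod_left]
    simpa using Nat.mod_eq_of_lt hj
  have h2 : (i' * k + j') % k = j' := by
    rw [Nat.add_mod, Nat.mul_mod_left]
    simpa using Nat.mod_eq_of_lt hj'
  have hjj : j = j' := by rw [← h1, ← h2, hv]
  refine ⟨?_, hjj⟩
  subst hjj
  have : i * k = i' * k := by omega
  have hk : 0 < k := by omega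
  exact Nat.eq_of_mul_eq_mul_right hk this

def auxB (k r : ℕ) (h : 0 < r * k) (i : ℕ) : Finset (Fin (r * k)) :=
  (Finset.Ico 1 k).image (vtx k r h i)

def edgeZ (k r : ℕ) (h : 0 < r * k) (t d : ℕ) : Finset (Fin (r * k)) :=
  insert (vtx k r h t 0) (auxB k r h (t - d))

def colE (k r : ℕ) (h : 0 < r * k) (s j : ℕ) : Finset (Fin (r * k)) :=
  (Finset.range k).image (fun l => vtx k r h (s + l) j)

def template (k r : ℕ) (h : 0 < r * k) : Finset (Finset (Fin (r * k))) :=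
  ((Finset.range r ×ˢ Finset.range k).image fun p => edgeZ k r h p.1 p.2) ∪
  ((Finset.range (r + 1 - k) ×ˢ Finset.Ico 1 k).image fun p => colE k r h p.1 p.2)

def Zset (k r : ℕ) (h : 0 < r * k) : Finset (Fin (r * k)) :=
  (Finset.range r).image (fun i => vtx k r h i 0)

variable {k r : ℕ} (h : 0 < r * k)
include h

lemma hk' : 0 < k := by
  rcases Nat.eq_zero_or_pos k with rfl | h2
  · simp at h
  · exact h2

lemma hr' : 0 < r := by
  rcases Nat.eq_zero_or_pos r with rfl | h2
  · simp at h
  · exact h2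

lemma mem_auxB {i : ℕ} {x : Fin (r * k)} :
    x ∈ auxB k r h i ↔ ∃ j, 1 ≤ j ∧ j < k ∧ x = vtx k r h i j := by
  simp only [auxB, mem_image, mem_Ico]
  constructor
  · rintro ⟨j, ⟨h1, h2⟩, rfl⟩; exact ⟨j, h1, h2, rfl⟩
  · rintro ⟨j, h1, h2, rfl⟩; exact ⟨j, ⟨h1, h2⟩, rfl⟩

lemma mem_colE {s j : ℕ} {x : Fin (r * k)} :
    x ∈ colE k r h s j ↔ ∃ l, l < k ∧ x = vtx k r h (s + l) j := by
  simp only [colE, mem_image, mem_range]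
  constructor
  · rintro ⟨l, h1, rfl⟩; exact ⟨l, h1, rfl⟩
  · rintro ⟨l, h1, rfl⟩; exact ⟨l, h1, rfl⟩

lemma auxB_card {i : ℕ} (hi : i < r) : (auxB k r h i).card = k - 1 := by
  rw [auxB, card_image_of_injOn, Nat.card_Ico]
  intro a ha b hb hab
  rw [Finset.mem_coe, mem_Ico] at ha hb
  exact (vtx_inj h hi ha.2 hi hb.2 hab).2

lemma edgeZ_card {t : ℕ} (ht : t < r) (d : ℕ) : (edgeZ k r h t d).card = k := by
  have hk : 0 < k := hk' h
  have htd : t - d < r := by omega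
  rw [edgeZ, card_insert_of_notMem, auxB_card h htd]
  · omega
  · intro hmem
    obtain ⟨j, hj1, hj2, hj3⟩ := (mem_auxB h).1 hmem
    have := (vtx_inj h ht hk htd hj2 hj3).2
    omega

lemma colE_card {s j : ℕ} (hs : s + k ≤ r) (hj : j < k) : (colE k r h s j).card = k := by
  rw [colE, card_image_of_injOn, card_range]
  intro a ha b hb hab
  rw [Finset.mem_coe, mem_range] at ha hb
  have := (vtx_inj h (by omega) hj (by omega) hj hab).1
  omega

lemma template_cards (hkr : k ≤ r) : ∀ e ∈ template k r h, e.card = k := by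
  intro e he
  rw [template, mem_union] at he
  rcases he with he | he
  · obtain ⟨p, hp, rfl⟩ := mem_image.1 he
    rw [mem_product, mem_range, mem_range] at hp
    exact edgeZ_card h hp.1 p.2
  · obtain ⟨p, hp, rfl⟩ := mem_image.1 he
    rw [mem_product, mem_range, mem_Ico] at hp
    exact colE_card h (by omega) hp.2.2

lemma template_card_le : (template k r h).card ≤ 2 * (k * r) := by
  have hk0 : 0 < k := hk' h
  have h1 := card_union_le
    ((Finset.range r ×ˢ Finset.range k).image fun p => edgeZ k r h p.1 p.2)
    ((Finset.range (r + 1 - k) ×ˢ Finset.Ico 1 k).image fun p => colE k r h p.1 p.2)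
  have h2 := card_image_le (s := Finset.range r ×ˢ Finset.range k)
    (f := fun p => edgeZ k r h p.1 p.2)
  have h3 := card_image_le (s := Finset.range (r + 1 - k) ×ˢ Finset.Ico 1 k)
    (f := fun p => colE k r h p.1 p.2)
  rw [card_product, card_range, card_range] at h2
  rw [card_product, card_range, Nat.card_Ico] at h3
  rw [template]
  have hb : (r + 1 - k) * (k - 1) ≤ r * k := by
    calc (r + 1 - k) * (k - 1) ≤ r * (k - 1) :=
          Nat.mul_le_mul_right (k - 1) (show r + 1 - k ≤ r by omega)
      _ ≤ r * k := Nat.mul_le_mul_left r (show k - 1 ≤ k by omega)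
  calc _ ≤ _ := h1
    _ ≤ r * k + (r + 1 - k) * (k - 1) := Nat.add_le_add h2 h3
    _ ≤ r * k + r * k := Nat.add_le_add_left hb _
    _ = 2 * (k * r) := by ring

lemma Zset_card : (Zset k r h).card = r := by
  have hk : 0 < k := hk' h
  rw [Zset, card_image_of_injOn, card_range]
  intro a ha b hb hab
  rw [Finset.mem_coe, mem_range] at ha hb
  exact (vtx_inj h ha hk hb hk hab).1

end Hypergraph

section Matching

variable {k r : ℕ} (h : 0 < r * k) {S : Finset ℕ}

lemma edge_mem_cases {t : ℕ} {x : Fin (r * k)} (hx : x ∈ edgeZ k r h t (sig k S t)) :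
    x = vtx k r h t 0 ∨ ∃ j, 1 ≤ j ∧ j < k ∧ x = vtx k r h (phi k S t) j := by
  rw [edgeZ, mem_insert] at hx
  rcases hx with hx | hx
  · exact Or.inl hx
  · exact Or.inr ((mem_auxB h).1 hx)

lemma dis11 {t t' : ℕ} (ht : t < r) (htS : t ∉ S) (ht' : t' < r) (ht'S : t' ∉ S)
    (hne : t ≠ t') :
    Disjoint (edgeZ k r h t (sig k S t)) (edgeZ k r h t' (sig k S t')) := by
  have hk0 : 0 < k := hk' h
  rw [Finset.disjoint_left]
  intro x hx hx'
  have hphit : phi k S t < r := lt_of_le_of_lt (Nat.sub_le _ _) ht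
  have hphit' : phi k S t' < r := lt_of_le_of_lt (Nat.sub_le _ _) ht'
  rcases edge_mem_cases h hx with hc | ⟨j, hj1, hj2, hc⟩ <;>
    rcases edge_mem_cases h hx' with hc' | ⟨j', hj1', hj2', hc'⟩
  · exact hne (vtx_inj h ht hk0 ht' hk0 (hc ▸ hc' ▸ rfl : vtx k r h t 0 = vtx k r h t' 0)).1
  · have := (vtx_inj h ht hk0 hphit' hj2' (hc ▸ hc' ▸ rfl)).2
    omega
  · have := (vtx_inj h hphit hj2 ht' hk0 (hc ▸ hc' ▸ rfl)).2
    omega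
  · have := (vtx_inj h hphit hj2 hphit' hj2' (hc ▸ hc' ▸ rfl)).1
    exact hne (phi_inj hk0 htS ht'S this)

lemma dis12 {t q j : ℕ} (ht : t < r) (htS : t ∉ S) (hq : q ∈ Qset k S)
    (hqr : q < r) (hj1 : 1 ≤ j) (hj2 : j < k) :
    Disjoint (edgeZ k r h t (sig k S t)) (colE k r h (q + 1 - k) j) := by
  have hk0 : 0 < k := hk' h
  have hqk : k - 1 ≤ q := qset_ge hk0 hq
  rw [Finset.disjoint_left]
  intro x hx hx'
  obtain ⟨l, hl, hc'⟩ := (mem_colE h).1 hx'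
  have hidx : q + 1 - k + l < r := by omega
  have hphit : phi k S t < r := lt_of_le_of_lt (Nat.sub_le _ _) ht
  rcases edge_mem_cases h hx with hc | ⟨j'', hj1'', hj2'', hc⟩
  · have := (vtx_inj h ht hk0 hidx hj2 (hc ▸ hc' ▸ rfl)).2
    omega
  · have heq := (vtx_inj h hphit hj2'' hidx hj2 (hc ▸ hc' ▸ rfl)).1
    apply phi_not_bad hk0 htS
    rw [Bad, mem_biUnion]
    exact ⟨q, hq, mem_Icc.2 ⟨by omega, by omega⟩⟩

lemma dis22 {q j q' j' : ℕ} (hq : q ∈ Qset k S) (hq' : q' ∈ Qset k S)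
    (hqr : q < r) (hq'r : q' < r) (hj1 : 1 ≤ j) (hj2 : j < k) (hj1' : 1 ≤ j') (hj2' : j' < k)
    (hne : q ≠ q' ∨ j ≠ j') :
    Disjoint (colE k r h (q + 1 - k) j) (colE k r h (q' + 1 - k) j') := by
  have hk0 : 0 < k := hk' h
  have hqk : k - 1 ≤ q := qset_ge hk0 hq
  have hqk' : k - 1 ≤ q' := qset_ge hk0 hq'
  rw [Finset.disjoint_left]
  intro x hx hx'
  obtain ⟨l, hl, hc⟩ := (mem_colE h).1 hx
  obtain ⟨l', hl', hc'⟩ := (mem_colE h).1 hx'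
  have hidx : q + 1 - k + l < r := by omega
  have hidx' : q' + 1 - k + l' < r := by omega
  have heq := vtx_inj h hidx hj2 hidx' hj2' (hc ▸ hc' ▸ rfl)
  rcases hne with hne | hne
  · rcases lt_or_gt_of_ne hne with hlt | hlt
    · have := qset_gap hk0 hq hq' hlt
      omega
    · have := qset_gap hk0 hq' hq hlt
      omega
  · exact hne heq.2

lemma master {k r : ℕ} (hk : 0 < k) (hkr : k ≤ r) (hr : 0 < r) :
    ∃ (T : Finset (Finset (Fin (r * k)))) (Z : Finset (Fin (r * k))),
      T.card ≤ 2 * (k * r) ∧ (∀ e ∈ T, e.card = k) ∧ Z.card = r ∧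
      ∀ W ⊆ Z, k ∣ (r * k - W.card) →
        ∃ M ⊆ T, IsMatching M ∧ (∀ e ∈ M, Disjoint e W) ∧
          ∀ v : Fin (r * k), v ∉ W → ∃ e ∈ M, v ∈ e := by
  have h : 0 < r * k := Nat.mul_pos hr hk
  refine ⟨template k r h, Zset k r h, template_card_le h, template_cards h hkr,
    Zset_card h, ?_⟩
  intro W hWZ hdvd
  set S : Finset ℕ := (Finset.range r).filter (fun i => vtx k r h i 0 ∈ W) with hSdef
  have hSr : S ⊆ Finset.range r := filter_subset _ _
  have hWim : W = S.image (fun i => vtx k r h i 0) := by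
    ext x
    constructor
    · intro hx
      obtain ⟨i, hi, rfl⟩ := mem_image.1 (hWZ hx)
      exact mem_image.2 ⟨i, mem_filter.2 ⟨hi, hx⟩, rfl⟩
    · intro hx
      obtain ⟨i, hi, rfl⟩ := mem_image.1 hx
      exact (mem_filter.1 hi).2
  have hWcard : W.card = S.card := by
    rw [hWim]
    apply card_image_of_injOn
    intro a ha b hb hab
    rw [Finset.mem_coe] at ha hb
    have ha' := mem_range.1 (hSr ha)
    have hb' := mem_range.1 (hSr hb)
    exact (vtx_inj h ha' hk hb' hk hab).1
  have hScard : S.card ≤ r := le_trans (card_le_card hSr) (by rw [card_range])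
  have hSdvd : k ∣ S.card := by
    rw [hWcard] at hdvd
    have h1 : k ∣ r * k := dvd_mul_left k r
    have h2 : S.card ≤ r * k := le_trans hScard (Nat.le_mul_of_pos_right r hk)
    have h3 : S.card = r * k - (r * k - S.card) := by omega
    rw [h3]
    exact Nat.dvd_sub h1 hdvd
  -- the matching
  set M1 : Finset (Finset (Fin (r * k))) :=
    ((Finset.range r) \ S).image (fun t => edgeZ k r h t (sig k S t)) with hM1
  set M2 : Finset (Finset (Fin (r * k))) :=
    ((Qset k S) ×ˢ Finset.Ico 1 k).image (fun p => colE k r h (p.1 + 1 - k) p.2) with hM2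
  have hqr : ∀ q ∈ Qset k S, q < r := by
    intro q hq
    exact mem_range.1 (hSr (mem_filter.1 hq).1)
  refine ⟨M1 ∪ M2, ?_, ?_, ?_, ?_⟩
  · -- subset of template
    intro e he
    rcases mem_union.1 he with he | he
    · obtain ⟨t, ht, rfl⟩ := mem_image.1 he
      rw [Finset.mem_sdiff] at ht
      apply mem_union_left
      exact mem_image.2 ⟨(t, sig k S t),
        mem_product.2 ⟨ht.1, mem_range.2 (sig_lt hk t)⟩, rfl⟩
    · obtain ⟨⟨q, j⟩, hp, rfl⟩ := mem_image.1 he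
      rw [mem_product, mem_Ico] at hp
      have hq := hp.1
      have hqk : k - 1 ≤ q := qset_ge hk hq
      have := hqr q hq
      apply mem_union_right
      exact mem_image.2 ⟨(q + 1 - k, j),
        mem_product.2 ⟨mem_range.2 (by omega), mem_Ico.2 hp.2⟩, rfl⟩
  · -- matching
    intro e he f hf hne
    rcases mem_union.1 he with he | he <;> rcases mem_union.1 hf with hf | hf
    · obtain ⟨t, ht, rfl⟩ := mem_image.1 he
      obtain ⟨t', ht', rfl⟩ := mem_image.1 hf
      rw [Finset.mem_sdiff, mem_range] at ht ht'
      exact dis11 h ht.1 ht.2 ht'.1 ht'.2 (fun hc => hne (by rw [hc]))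
    · obtain ⟨t, ht, rfl⟩ := mem_image.1 he
      obtain ⟨⟨q, j⟩, hp, rfl⟩ := mem_image.1 hf
      rw [Finset.mem_sdiff, mem_range] at ht
      rw [mem_product, mem_Ico] at hp
      exact dis12 h ht.1 ht.2 hp.1 (hqr _ hp.1) hp.2.1 hp.2.2
    · obtain ⟨⟨q, j⟩, hp, rfl⟩ := mem_image.1 he
      obtain ⟨t, ht, rfl⟩ := mem_image.1 hf
      rw [Finset.mem_sdiff, mem_range] at ht
      rw [mem_product, mem_Ico] at hp
      exact (dis12 h ht.1 ht.2 hp.1 (hqr _ hp.1) hp.2.1 hp.2.2).symm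
    · obtain ⟨⟨q, j⟩, hp, rfl⟩ := mem_image.1 he
      obtain ⟨⟨q', j'⟩, hp', rfl⟩ := mem_image.1 hf
      rw [mem_product, mem_Ico] at hp hp'
      have hne' : q ≠ q' ∨ j ≠ j' := by
        by_contra hcon
        push_neg at hcon
        exact hne (by rw [hcon.1, hcon.2])
      exact dis22 h hp.1 hp'.1 (hqr _ hp.1) (hqr _ hp'.1) hp.2.1 hp.2.2 hp'.2.1 hp'.2.2 hne'
  · -- disjoint from W
    intro e he
    rw [Finset.disjoint_left]
    intro x hx hxW
    rw [hWim] at hxW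
    obtain ⟨i, hiS, rfl⟩ := mem_image.1 hxW
    have hir : i < r := mem_range.1 (hSr hiS)
    rcases mem_union.1 he with he | he
    · obtain ⟨t, ht, rfl⟩ := mem_image.1 he
      rw [Finset.mem_sdiff, mem_range] at ht
      rcases edge_mem_cases h hx with hc | ⟨j, hj1, hj2, hc⟩
      · have := (vtx_inj h hir hk ht.1 hk hc).1
        exact ht.2 (this ▸ hiS)
      · have hphit : phi k S t < r := lt_of_le_of_lt (Nat.sub_le _ _) ht.1
        have := (vtx_inj h hir hk hphit hj2 hc).2
        omega
    · obtain ⟨⟨q, j⟩, hp, rfl⟩ := mem_image.1 he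
      rw [mem_product, mem_Ico] at hp
      obtain ⟨l, hl, hc⟩ := (mem_colE h).1 hx
      have hqk : k - 1 ≤ q := qset_ge hk hp.1
      have hq'r := hqr _ hp.1
      have hidx : q + 1 - k + l < r := by omega
      have := (vtx_inj h hir hk hidx hp.2.2 hc).2
      omega
  · -- covering
    intro v hvW
    have hvval : v.val < r * k := v.isLt
    set i := v.val / k with hi
    set j := v.val % k with hj
    have hir : i < r := by
      rw [hi, Nat.div_lt_iff_lt_mul hk]
      exact hvval
    have hjk : j < k := Nat.mod_lt _ hk
    have h2 : i * k + j = v.val := by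
      rw [hi, hj, Nat.mul_comm]
      exact Nat.div_add_mod v.val k
    have hv : v = vtx k r h i j := by
      apply Fin.ext
      rw [vtx_val h hir hjk]
      exact h2.symm
    rcases Nat.eq_zero_or_pos j with hj0 | hj0
    · -- z-vertex
      have hiS : i ∉ S := by
        intro hin
        apply hvW
        rw [hWim]
        exact mem_image.2 ⟨i, hin, by rw [hv, hj0]⟩
      refine ⟨edgeZ k r h i (sig k S i), mem_union_left _ (mem_image.2
        ⟨i, Finset.mem_sdiff.2 ⟨mem_range.2 hir, hiS⟩, rfl⟩), ?_⟩
      rw [hv, hj0, edgeZ]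
      exact mem_insert_self _ _
    · -- aux vertex in block i
      by_cases hib : i ∈ Bad k S
      · rw [Bad, mem_biUnion] at hib
        obtain ⟨q, hq, hIcc⟩ := hib
        rw [mem_Icc] at hIcc
        have hqk : k - 1 ≤ q := qset_ge hk hq
        refine ⟨colE k r h (q + 1 - k) j, mem_union_right _ (mem_image.2
          ⟨(q, j), mem_product.2 ⟨hq, mem_Ico.2 ⟨hj0, hjk⟩⟩, rfl⟩), ?_⟩
        rw [mem_colE h]
        exact ⟨i - (q + 1 - k), by omega, by rw [hv]; congr 1; omega⟩
      · have himem : i ∈ Finset.range r \ Bad k S := Finset.mem_sdiff.2 ⟨mem_range.2 hir, hib⟩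
        rw [← phi_image hk hSr hSdvd] at himem
        obtain ⟨t, htm, hphit⟩ := mem_image.1 himem
        rw [Finset.mem_sdiff, mem_range] at htm
        refine ⟨edgeZ k r h t (sig k S t), mem_union_left _ (mem_image.2
          ⟨t, Finset.mem_sdiff.2 ⟨mem_range.2 htm.1, htm.2⟩, rfl⟩), ?_⟩
        rw [edgeZ]
        apply mem_insert_of_mem
        rw [mem_auxB h]
        refine ⟨j, hj0, hjk, ?_⟩
        rw [hv]
        congr 1
        rw [← hphit]
        rfl

end Matching

end RT

/-- **resilient template.** For each fixed `k` there is `L > 0` such that for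
all sufficiently large `r` there exists a `k`-graph `T` with at most `L·r` vertices, at most
`L·r` edges, and an identified set `Z` of `r` vertices, such that for every `W ⊆ Z` with
`|W| < r/2` for which the number of vertices of `T - W` is divisible by `k`, the `k`-graph
`T - W` has a perfect matching. -/
theorem resilient_template (k : ℕ) (hk : 0 < k) :
    ∃ L : ℝ, 0 < L ∧ ∃ r₀ : ℕ, ∀ r : ℕ, r₀ ≤ r →
      ∃ (N : ℕ) (T : Finset (Finset (Fin N))) (Z : Finset (Fin N)),
        (N : ℝ) ≤ L * r ∧ (T.card : ℝ) ≤ L * r ∧ (∀ e ∈ T, e.card = k) ∧ Z.card = r ∧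
        ∀ W ⊆ Z, (W.card : ℝ) < (r : ℝ) / 2 → k ∣ (N - W.card) →
          ∃ M ⊆ T, IsMatching M ∧ (∀ e ∈ M, Disjoint e W) ∧
            ∀ v : Fin N, v ∉ W → ∃ e ∈ M, v ∈ e := by
  refine ⟨2 * (k : ℝ), by positivity, k + 1, ?_⟩
  intro r hr
  have hkr : k ≤ r := by omega
  have hr0 : 0 < r := by omega
  obtain ⟨T, Z, hTcard, hTk, hZ, hmain⟩ := RT.master hk hkr hr0
  refine ⟨r * k, T, Z, ?_, ?_, hTk, hZ, ?_⟩
  · have h1 : r * k ≤ 2 * (k * r) := by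
      rw [Nat.mul_comm r k]
      exact Nat.le_mul_of_pos_left (k * r) (by norm_num)
    calc ((r * k : ℕ) : ℝ) ≤ ((2 * (k * r) : ℕ) : ℝ) := by exact_mod_cast h1
      _ = 2 * (k : ℝ) * r := by push_cast; ring
  · calc ((T.card : ℕ) : ℝ) ≤ ((2 * (k * r) : ℕ) : ℝ) := by exact_mod_cast hTcard
      _ = 2 * (k : ℝ) * r := by push_cast; ring
  · intro W hWZ _ hdvd
    exact hmain W hWZ hdvd

end DiracRandom
end

section
/- For any k ≥ 2 there is some K ∈ ℕ such that the following holds. For all sufficiently large r there is a k-graph G with r vertices and at most K·r edges such that every set of ⌈r/2⌉ vertices of G contains an edge (i.e., G has no independent set of size r/2). -/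
open Finset MeasureTheory Filter

namespace DiracRandom

/-- For any `k ≥ 2` there is `K` such that for all sufficiently large `r`
there is a `k`-graph `G` with `r` vertices and at most `K·r` edges in which every set of
`⌈r/2⌉` vertices contains an edge (i.e. `G` has no independent set of size `r/2`). -/
theorem no_large_independent_set (k : ℕ) (hk : 2 ≤ k) :
    ∃ K : ℕ, ∃ r₀ : ℕ, ∀ r : ℕ, r₀ ≤ r →
      ∃ G : Finset (Finset (Fin r)), (∀ e ∈ G, e.card = k) ∧ G.card ≤ K * r ∧
        ∀ A : Finset (Fin r), ⌈(r : ℝ) / 2⌉₊ ≤ A.card → ∃ e ∈ G, e ⊆ A := by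
  set m := 2 * k - 1 with hm
  have hm3 : 3 ≤ m := by omega
  have hm0 : 0 < m := by omega
  refine ⟨2 ^ m, m * m, fun r hr => ?_⟩
  have hr0 : 0 < r := by nlinarith
  set q := (r + m - 1) / m with hq
  -- basic facts about q
  have hqm : q * m ≤ r + m - 1 := Nat.div_mul_le_self _ _
  have hrq : r ≤ q * m := by
    have h := Nat.div_add_mod (r + m - 1) m
    have h2 : (r + m - 1) % m < m := Nat.mod_lt _ hm0
    rw [← hq] at h
    have h3 : m * q = q * m := mul_comm _ _
    omega
  have hqge : m ≤ q := by
    have h1 : m * m / m ≤ (r + m - 1) / m :=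
      Nat.div_le_div_right (by omega)
    rw [Nat.mul_div_cancel _ hm0] at h1
    omega
  -- the key counting inequality: 2*((k-1)*q) < r
  have hkey : 2 * ((k - 1) * q) < r := by
    have h1 : (m - 1) * q = m * q - q := by
      rw [Nat.sub_mul, one_mul]
    have h2 : m * q ≤ r + m - 1 := by rw [mul_comm]; exact hqm
    have h3 : 2 * (k - 1) = m - 1 := by omega
    have h4 : 2 * ((k - 1) * q) = (m - 1) * q := by
      rw [← h3]; ring
    have h5 : q ≤ m * q := Nat.le_mul_of_pos_left q hm0
    omega
  refine ⟨Finset.univ.filter (fun e : Finset (Fin r) =>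
      e.card = k ∧ ∀ v ∈ e, ∀ w ∈ e, v.val / m = w.val / m), ?_, ?_, ?_⟩
  · intro e he
    exact (Finset.mem_filter.mp he).2.1
  · -- edge count
    have hsub : Finset.univ.filter (fun e : Finset (Fin r) =>
        e.card = k ∧ ∀ v ∈ e, ∀ w ∈ e, v.val / m = w.val / m) ⊆
        (Finset.range r).biUnion (fun j =>
          (Finset.univ.filter (fun v : Fin r => v.val / m = j)).powerset) := by
      intro e he
      rw [Finset.mem_filter] at he
      obtain ⟨-, hcard, hsame⟩ := he
      have hne : e.Nonempty := by
        rw [← Finset.card_pos, hcard]; omega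
      obtain ⟨v₀, hv₀⟩ := hne
      rw [Finset.mem_biUnion]
      refine ⟨v₀.val / m, ?_, ?_⟩
      · rw [Finset.mem_range]
        exact lt_of_le_of_lt (Nat.div_le_self _ _) v₀.isLt
      · rw [Finset.mem_powerset]
        intro w hw
        rw [Finset.mem_filter]
        exact ⟨Finset.mem_univ _, hsame w hw v₀ hv₀⟩
    refine le_trans (Finset.card_le_card hsub) ?_
    refine le_trans (Finset.card_biUnion_le) ?_
    rw [mul_comm]
    refine le_trans (Finset.sum_le_card_nsmul _ _ (2 ^ m) ?_) (by
      simp [Finset.card_range, smul_eq_mul, mul_comm])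
    intro j hj
    rw [Finset.card_powerset]
    refine Nat.pow_le_pow_right (by norm_num) ?_
    -- each block has at most m vertices
    refine le_trans (Finset.card_le_card_of_injOn (fun (v : Fin r) => v.val % m)
      (fun v hv => Finset.mem_range.mpr (Nat.mod_lt _ hm0)) ?_) (le_of_eq (Finset.card_range m))
    intro v hv w hw hvw
    rw [Finset.mem_coe, Finset.mem_filter] at hv hw
    have h1 := Nat.div_add_mod v.val m
    have h2 := Nat.div_add_mod w.val m
    apply Fin.ext
    have hvw' : v.val % m = w.val % m := hvw
    rw [hv.2] at h1
    rw [hw.2] at h2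
    omega
  · -- covering property
    intro A hA
    have hmaps : ∀ v ∈ A, v.val / m ∈ Finset.range q := by
      intro v hv
      rw [Finset.mem_range, Nat.div_lt_iff_lt_mul hm0]
      exact lt_of_lt_of_le v.isLt hrq
    have hlt : (Finset.range q).card * (k - 1) < A.card := by
      rw [Finset.card_range]
      have hkey' : 2 * (q * (k - 1)) < r := by rwa [mul_comm q (k - 1)]
      have h1 : q * (k - 1) < ⌈(r : ℝ) / 2⌉₊ := by
        rw [Nat.lt_ceil]
        have : ((2 * (q * (k - 1)) : ℕ) : ℝ) < (r : ℕ) := by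
          exact_mod_cast hkey' 
        push_cast at this ⊢
        linarith
      omega
    obtain ⟨j, -, hj⟩ :=
      Finset.exists_lt_card_fiber_of_mul_lt_card_of_maps_to hmaps hlt
    obtain ⟨e, hesub, hecard⟩ :=
      Finset.exists_subset_card_eq (by omega : k ≤ (A.filter (fun v => v.val / m = j)).card)
    refine ⟨e, ?_, fun v hv => (Finset.mem_filter.mp (hesub hv)).1⟩
    rw [Finset.mem_filter]
    refine ⟨Finset.mem_univ _, hecard, fun v hv w hw => ?_⟩
    rw [(Finset.mem_filter.mp (hesub hv)).2, (Finset.mem_filter.mp (hesub hw)).2]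

end DiracRandom
end

section
/- Fix η > 0 and k ∈ ℕ. There is K > 0 such that for any k-uniform contracted absorber H with girth at least K, the k-density satisfies m_k(H) ≤ 2/k + η. -/
open Finset MeasureTheory Filter

namespace DiracRandom

/-- A matching (pairwise disjoint family of edges) in a hypergraph on vertex type `V`. -/
def IsMatchingV {V : Type*} (M : Finset (Finset V)) : Prop :=
  ∀ e ∈ M, ∀ f ∈ M, e ≠ f → Disjoint e f

/-- `IsAbsorberOn k m H A x`: the `k`-uniform hypergraph with edge set `H` and vertex set
`A` is an absorber rooted on the `m`-tuple of vertices `x`: its edges can be partitioned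
into a perfect matching `M₁` of `A` (the covering matching) and a matching `M₂` covering
exactly the vertices of `A` other than the roots (the non-covering matching).
(`m = k` for ordinary absorbers and `m = r·k` for `r`-absorbers.) -/
def IsAbsorberOn {V : Type*} [DecidableEq V] (k m : ℕ)
    (H : Finset (Finset V)) (A : Finset V) (x : Fin m → V) : Prop :=
  (∀ i, x i ∈ A) ∧ (∀ e ∈ H, e.card = k ∧ e ⊆ A) ∧
  ∃ M₁ M₂ : Finset (Finset V), Disjoint M₁ M₂ ∧ M₁ ∪ M₂ = H ∧
    IsMatchingV M₁ ∧ IsMatchingV M₂ ∧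
    (∀ v ∈ A, ∃ e ∈ M₁, v ∈ e) ∧
    (∀ v ∈ A, ((∃ e ∈ M₂, v ∈ e) ↔ v ∉ Set.range x))

/-- A Berge cycle of length `ℓ`: distinct edges `e 0, …, e (ℓ-1)` together with distinct
vertices `v i ∈ e i ∩ e (i+1)` (cyclically). -/
def HasBergeCycle {V : Type*} (H : Finset (Finset V)) (ℓ : ℕ) : Prop :=
  ∃ (e : Fin ℓ → Finset V) (v : Fin ℓ → V),
    Function.Injective e ∧ Function.Injective v ∧
    (∀ i, e i ∈ H) ∧ ∀ i, v i ∈ e i ∧ v i ∈ e (finRotate ℓ i)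

/-- Girth at least `K`: no Berge cycle of length `ℓ` with `2 ≤ ℓ < K`. -/
def GirthAtLeast {V : Type*} (H : Finset (Finset V)) (K : ℕ) : Prop :=
  ∀ ℓ : ℕ, 2 ≤ ℓ → ℓ < K → ¬ HasBergeCycle H ℓ

/-- A contracted absorber rooted at the (injective) `k`-tuple `x`: a union of `k-1`
absorbers (the sub-absorbers), each rooted at `x`, which are pairwise disjoint except for
the root vertices. -/
def IsContractedAbsorber {V : Type*} [DecidableEq V] (k : ℕ)
    (H : Finset (Finset V)) (x : Fin k → V) : Prop :=
  Function.Injective x ∧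
  ∃ (A : Fin (k - 1) → Finset V) (Hs : Fin (k - 1) → Finset (Finset V)),
    (∀ j, IsAbsorberOn k k (Hs j) (A j) x) ∧
    (∀ j j', j ≠ j' → ∀ v, v ∈ A j → v ∈ A j' → v ∈ Finset.image x Finset.univ) ∧
    H = Finset.univ.biUnion Hs

lemma buildCycle {V : Type} (H : Finset (Finset V)) (ℓ : ℕ) (hℓ : 2 ≤ ℓ)
    (F : ℕ → Finset V) (U : ℕ → V)
    (hF : ∀ i < ℓ, F i ∈ H)
    (hFinj : ∀ i < ℓ, ∀ j < ℓ, F i = F j → i = j)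
    (hUinj : ∀ i < ℓ, ∀ j < ℓ, U i = U j → i = j)
    (hmem : ∀ i < ℓ, U i ∈ F i)
    (hnext : ∀ i, i + 1 < ℓ → U i ∈ F (i + 1))
    (hclose : U (ℓ - 1) ∈ F 0) :
    HasBergeCycle H ℓ := by
  obtain ⟨n, rfl⟩ : ∃ n, ℓ = n + 1 := ⟨ℓ - 1, by omega⟩
  refine ⟨fun i => F i.val, fun i => U i.val, ?_, ?_, fun i => hF _ i.isLt, fun i => ?_⟩
  · intro a b hab
    exact Fin.ext (hFinj _ a.isLt _ b.isLt hab)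
  · intro a b hab
    exact Fin.ext (hUinj _ a.isLt _ b.isLt hab)
  · refine ⟨hmem _ i.isLt, ?_⟩
    rw [finRotate_succ_apply]
    have hval : ((i + 1 : Fin (n + 1))).val = (i.val + 1) % (n + 1) := by
      simp [Fin.add_def]
    rcases Nat.lt_or_ge (i.val + 1) (n + 1) with h | h
    · have : ((i + 1 : Fin (n + 1))).val = i.val + 1 := by
        rw [hval, Nat.mod_eq_of_lt h]
      rw [show (i + 1 : Fin (n+1)) = ⟨i.val + 1, h⟩ from Fin.ext this]
      exact hnext _ h
    · have hi : i.val = n := by omega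
      have : ((i + 1 : Fin (n + 1))).val = 0 := by
        rw [hval, hi, Nat.mod_self]
      rw [show (i + 1 : Fin (n+1)) = ⟨0, by omega⟩ from Fin.ext this]
      show U i.val ∈ F 0
      have h2 : U i.val = U (n + 1 - 1) := by rw [hi]; congr 1
      rw [h2]
      exact hclose

lemma exists_leaf {V : Type} [DecidableEq V] (H H' : Finset (Finset V)) (hsub : H' ⊆ H)
    (K : ℕ) (hg : GirthAtLeast H K) (hK : H'.card < K) (hne : H'.Nonempty) :
    ∃ f ∈ H', (f ∩ ((H'.erase f).sup id)).card ≤ 1 := by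
  by_contra hcon
  push_neg at hcon
  have key : ∀ n, n ≤ H'.card → ∃ (f : ℕ → Finset V) (u : ℕ → V),
      (∀ i ≤ n, f i ∈ H') ∧ (∀ i ≤ n, ∀ j ≤ n, f i = f j → i = j) ∧
      (∀ i < n, u i ∈ f i ∧ u i ∈ f (i + 1)) ∧
      (∀ i < n, ∀ j < n, u i = u j → i = j) := by
    intro n
    induction n with
    | zero =>
      intro _
      obtain ⟨f₀, hf₀⟩ := hne
      have hV : (f₀ ∩ ((H'.erase f₀).sup id)).Nonempty := by
        have := hcon f₀ hf₀
        exact Finset.card_pos.mp (by omega)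
      obtain ⟨w₀, -⟩ := hV
      exact ⟨fun _ => f₀, fun _ => w₀, fun i _ => hf₀, fun i hi j hj _ => by omega,
        fun i hi => by omega, fun i hi => by omega⟩
    | succ n IH =>
      intro hn1
      obtain ⟨f, u, hf, hfinj, hmu, huinj⟩ := IH (by omega)
      set B := (H'.erase (f n)).sup id with hBdef
      have h2c : 1 < (f n ∩ B).card := hcon (f n) (hf n le_rfl)
      obtain ⟨w, hwf, hwB, hwne⟩ : ∃ w, w ∈ f n ∧ w ∈ B ∧ (1 ≤ n → w ≠ u (n - 1)) := by
        obtain ⟨a, ha, b, hb, hab⟩ := Finset.one_lt_card.mp h2c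
        rw [mem_inter] at ha hb
        by_cases hau : 1 ≤ n ∧ a = u (n - 1)
        · exact ⟨b, hb.1, hb.2, fun _ hb' => hab (by rw [hb', ← hau.2])⟩
        · exact ⟨a, ha.1, ha.2, fun h1 ha' => hau ⟨h1, ha'⟩⟩
      obtain ⟨g, hg', hwg⟩ := Finset.mem_sup.mp hwB
      have hgne : g ≠ f n := Finset.ne_of_mem_erase hg'
      have hgH' : g ∈ H' := Finset.mem_of_mem_erase hg'
      by_cases hc1 : ∃ j, j < n ∧ u j = w
      · -- close a cycle using w = u j
        exfalso
        obtain ⟨j, hjn, hjw⟩ := hc1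
        have hn1' : 1 ≤ n := by omega
        have hne' : w ≠ u (n - 1) := hwne hn1'
        have hj2 : j + 2 ≤ n := by
          rcases Nat.lt_or_ge (j + 2) (n + 1) with h | h
          · by_contra hcc
            have hj1 : j = n - 1 := by omega
            exact hne' (by rw [← hj1, hjw])
          · exfalso
            have hj1 : j = n - 1 := by omega
            exact hne' (by rw [← hj1, hjw])
        set ℓ := n - j with hldef
        have hℓ2 : 2 ≤ ℓ := by omega
        refine hg ℓ hℓ2 (by omega) (buildCycle H ℓ hℓ2 (fun m => f (j + 1 + m))
          (fun m => if m = ℓ - 1 then w else u (j + 1 + m)) ?_ ?_ ?_ ?_ ?_ ?_)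
        · intro m hm; exact hsub (hf (j + 1 + m) (by omega))
        · intro a ha b hb hab
          have := hfinj (j + 1 + a) (by omega) (j + 1 + b) (by omega) hab
          omega
        · intro a ha b hb hab
          by_cases h1 : a = ℓ - 1 <;> by_cases h2 : b = ℓ - 1
          · omega
          · rw [if_pos h1, if_neg h2] at hab
            have := huinj j (by omega) (j + 1 + b) (by omega) (hjw.trans hab)
            omega
          · rw [if_neg h1, if_pos h2] at hab
            have := huinj (j + 1 + a) (by omega) j (by omega) (hab.trans hjw.symm)
            omega
          · rw [if_neg h1, if_neg h2] at hab
            have := huinj (j + 1 + a) (by omega) (j + 1 + b) (by omega) hab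
            omega
        · intro m hm
          by_cases h1 : m = ℓ - 1
          · rw [if_pos h1]
            have hidx : j + 1 + m = n := by omega
            rw [hidx]
            exact hwf
          · rw [if_neg h1]
            exact (hmu (j + 1 + m) (by omega)).1
        · intro m hm
          have hmne : m ≠ ℓ - 1 := by omega
          rw [if_neg hmne]
          have hidx : j + 1 + (m + 1) = (j + 1 + m) + 1 := by omega
          rw [hidx]
          exact (hmu (j + 1 + m) (by omega)).2
        · rw [if_pos rfl]
          have hidx : j + 1 + 0 = j + 1 := by omega
          rw [hidx, ← hjw]
          exact (hmu j (by omega)).2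
      · push_neg at hc1
        by_cases hc2 : ∃ i, i ≤ n ∧ f i = g
        · -- close a cycle using g = f i
          exfalso
          obtain ⟨i, hin, hig⟩ := hc2
          have hinn : i < n := by
            rcases Nat.lt_or_ge i n with h | h
            · exact h
            · exfalso; have : i = n := by omega
              exact hgne (by rw [← hig, this])
          set ℓ := n - i + 1 with hldef
          have hℓ2 : 2 ≤ ℓ := by omega
          refine hg ℓ hℓ2 (by omega) (buildCycle H ℓ hℓ2 (fun m => f (i + m))
            (fun m => if m = ℓ - 1 then w else u (i + m)) ?_ ?_ ?_ ?_ ?_ ?_)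
          · intro m hm; exact hsub (hf (i + m) (by omega))
          · intro a ha b hb hab
            have := hfinj (i + a) (by omega) (i + b) (by omega) hab
            omega
          · intro a ha b hb hab
            by_cases h1 : a = ℓ - 1 <;> by_cases h2 : b = ℓ - 1
            · omega
            · rw [if_pos h1, if_neg h2] at hab
              exact absurd hab.symm (hc1 (i + b) (by omega))
            · rw [if_neg h1, if_pos h2] at hab
              exact absurd hab (hc1 (i + a) (by omega))
            · rw [if_neg h1, if_neg h2] at hab
              have := huinj (i + a) (by omega) (i + b) (by omega) hab
              omega
          · intro m hm
            by_cases h1 : m = ℓ - 1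
            · rw [if_pos h1]
              have hidx : i + m = n := by omega
              rw [hidx]
              exact hwf
            · rw [if_neg h1]
              exact (hmu (i + m) (by omega)).1
          · intro m hm
            have hmne : m ≠ ℓ - 1 := by omega
            rw [if_neg hmne]
            have hidx : i + (m + 1) = (i + m) + 1 := by omega
            rw [hidx]
            exact (hmu (i + m) (by omega)).2
          · rw [if_pos rfl]
            have hidx : i + 0 = i := by omega
            rw [hidx, hig]
            exact hwg
        · -- extend the path
          push_neg at hc2
          refine ⟨fun i => if i ≤ n then f i else g, fun i => if i < n then u i else w,
            ?_, ?_, ?_, ?_⟩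
          · intro i hi
            dsimp only
            by_cases h1 : i ≤ n
            · rw [if_pos h1]; exact hf i h1
            · rw [if_neg h1]; exact hgH'
          · intro i hi j hj hij
            dsimp only at hij
            by_cases h1 : i ≤ n <;> by_cases h2 : j ≤ n
            · rw [if_pos h1, if_pos h2] at hij; exact hfinj i h1 j h2 hij
            · rw [if_pos h1, if_neg h2] at hij
              exact absurd hij (hc2 i h1)
            · rw [if_neg h1, if_pos h2] at hij
              exact absurd hij.symm (hc2 j h2)
            · omega
          · intro i hi
            dsimp only
            by_cases h1 : i < n
            · rw [if_pos h1, if_pos (by omega : i ≤ n), if_pos (by omega : i + 1 ≤ n)]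
              exact hmu i h1
            · have hieq : i = n := by omega
              subst hieq
              rw [if_neg (by omega : ¬ i < i), if_pos le_rfl, if_neg (by omega : ¬ i + 1 ≤ i)]
              exact ⟨hwf, hwg⟩
          · intro i hi j hj hij
            dsimp only at hij
            by_cases h1 : i < n <;> by_cases h2 : j < n
            · rw [if_pos h1, if_pos h2] at hij; exact huinj i h1 j h2 hij
            · rw [if_pos h1, if_neg h2] at hij
              exact absurd hij (hc1 i h1)
            · rw [if_neg h1, if_pos h2] at hij
              exact absurd hij.symm (hc1 j h2)
            · omega
  obtain ⟨f, u, hf, hfinj, -, -⟩ := key H'.card le_rfl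
  have hinj : Set.InjOn f (Finset.range (H'.card + 1)) := by
    intro a ha b hb hab
    rw [Finset.coe_range, Set.mem_Iio] at ha hb
    exact hfinj a (by omega) b (by omega) hab
  have hmaps : ∀ i ∈ Finset.range (H'.card + 1), f i ∈ H' := by
    intro i hi
    rw [Finset.mem_range] at hi
    exact hf i (by omega)
  have := Finset.card_le_card_of_injOn f hmaps hinj
  rw [Finset.card_range] at this
  omega


lemma forest_bound {V : Type} [DecidableEq V] (H : Finset (Finset V)) (K k : ℕ)
    (hg : GirthAtLeast H K) :
    ∀ n (H' : Finset (Finset V)), H'.card = n → H' ⊆ H → H'.card < K →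
      (∀ f ∈ H', f.card = k) → H'.Nonempty →
      k * H'.card + 1 ≤ (H'.sup id).card + H'.card := by
  intro n
  induction n using Nat.strong_induction_on with
  | _ n IH =>
    intro H' hcard hsub hK hunif hne
    obtain ⟨f, hf, hleaf⟩ := exists_leaf H H' hsub K hg hK hne
    by_cases h1 : H'.erase f = ∅
    · have hH' : H' = {f} := by
        apply Finset.eq_singleton_iff_unique_mem.mpr
        refine ⟨hf, fun g hg' => ?_⟩
        by_contra hgf
        exact absurd (Finset.mem_erase.mpr ⟨hgf, hg'⟩) (by rw [h1]; exact notMem_empty g)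
      rw [hH']
      simp [hunif f hf]
    · set H'' := H'.erase f with hH''
      have hne'' : H''.Nonempty := Finset.nonempty_of_ne_empty h1
      have hnpos : 1 ≤ n := by
        rw [← hcard]; exact Finset.card_pos.mpr hne
      have hc'' : H''.card = n - 1 := by rw [hH'', Finset.card_erase_of_mem hf, hcard]
      have IH' := IH (n - 1) (by omega) H'' hc''
        ((Finset.erase_subset f H').trans hsub) (by omega)
        (fun g hg' => hunif g (Finset.mem_of_mem_erase hg')) hne''
      have hsup : H'.sup id = f ∪ H''.sup id := by
        conv_lhs => rw [← Finset.insert_erase hf]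
        rw [Finset.sup_insert]
        rfl
      have hcardeq : (f ∪ H''.sup id).card + (f ∩ H''.sup id).card
          = f.card + (H''.sup id).card := Finset.card_union_add_card_inter _ _
      have hfk : f.card = k := hunif f hf
      have hkmul : k * (n - 1) + k = k * n := by
        rw [← Nat.mul_succ]
        congr 1
        omega
      rw [hsup, hcard]
      rw [hc''] at IH'
      omega

/-- Fix `η > 0` and `k ∈ ℕ`. There is `K` such that every `k`-uniform
contracted absorber `H` with girth at least `K` has `k`-density `m_k(H) ≤ 2/k + η`, i.e.
every subgraph `H' ⊆ H` with more than `k` vertices satisfies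
`(e(H') - 1)/(v(H') - k) ≤ 2/k + η`. -/
theorem contracted_absorber_density (η : ℝ) (hη : 0 < η) (k : ℕ) :
    ∃ K : ℕ, 0 < K ∧ ∀ (V : Type) [DecidableEq V],
      ∀ (H : Finset (Finset V)) (x : Fin k → V),
        IsContractedAbsorber k H x → GirthAtLeast H K →
        ∀ H' ⊆ H, k < (H'.sup id).card →
          ((H'.card : ℝ) - 1) / (((H'.sup id).card : ℝ) - (k : ℝ)) ≤ 2 / (k : ℝ) + η := by
  classical
  set c := ⌈((k : ℝ) + 1) / η⌉₊ with hcdef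
  refine ⟨k + 3 + c, Nat.lt_of_lt_of_le (by omega) (Nat.le_add_right _ _), ?_⟩
  intro V _ H x hCA hgirth H' hsub hv
  obtain ⟨hxinj, A, Hs, habs, hdisjA, hHeq⟩ := hCA
  set v := (H'.sup id).card with hvdef
  set e := H'.card with hedef
  have hne : H'.Nonempty := by
    rcases Finset.eq_empty_or_nonempty H' with h | h
    · exfalso
      rw [hvdef, h] at hv
      simp at hv
    · exact h
  have hk2 : 2 ≤ k := by
    obtain ⟨f, hf⟩ := hne
    have hfH := hsub hf
    rw [hHeq] at hfH
    obtain ⟨j, -, -⟩ := Finset.mem_biUnion.mp hfH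
    have := j.isLt
    omega
  have hunif : ∀ f ∈ H', f.card = k := by
    intro f hf
    have hfH := hsub hf
    rw [hHeq] at hfH
    obtain ⟨j, -, hfj⟩ := Finset.mem_biUnion.mp hfH
    exact ((habs j).2.1 f hfj).1
  set R := Finset.image x Finset.univ with hRdef
  -- matchings have degree at most one
  have hmatch : ∀ (M : Finset (Finset V)) (u : V), IsMatchingV M →
      (M.filter (fun f => u ∈ f)).card ≤ 1 := by
    intro M u hM
    refine Finset.card_le_one.mpr ?_
    intro a ha b hb
    rw [Finset.mem_filter] at ha hb
    by_contra hne'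
    exact Finset.disjoint_left.mp (hM a ha.1 b hb.1 hne') ha.2 hb.2
  have habsdeg : ∀ (j : Fin (k - 1)) (u : V),
      ((Hs j).filter (fun f => u ∈ f)).card ≤ 2 ∧
      (u ∈ R → ((Hs j).filter (fun f => u ∈ f)).card ≤ 1) := by
    intro j u
    obtain ⟨hxA, hedge, M₁, M₂, hdM, hun, hm1, hm2, hcov, hncov⟩ := habs j
    have hfil : (Hs j).filter (fun f => u ∈ f)
        = M₁.filter (fun f => u ∈ f) ∪ M₂.filter (fun f => u ∈ f) := by
      rw [← hun, Finset.filter_union]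
    constructor
    · rw [hfil]
      calc (M₁.filter (fun f => u ∈ f) ∪ M₂.filter (fun f => u ∈ f)).card
          ≤ (M₁.filter (fun f => u ∈ f)).card + (M₂.filter (fun f => u ∈ f)).card :=
            Finset.card_union_le _ _
        _ ≤ 2 := by
            have := hmatch M₁ u hm1
            have := hmatch M₂ u hm2
            omega
    · intro hu
      have hM2 : M₂.filter (fun f => u ∈ f) = ∅ := by
        rw [Finset.filter_eq_empty_iff]
        intro g hg hug
        have hgH : g ∈ Hs j := by rw [← hun]; exact Finset.mem_union_right _ hg
        have huA : u ∈ A j := (hedge g hgH).2 hug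
        have hnr : u ∉ Set.range x := (hncov u huA).mp ⟨g, hg, hug⟩
        obtain ⟨i, -, hi⟩ := Finset.mem_image.mp hu
        exact hnr ⟨i, hi⟩
      rw [hfil, hM2, Finset.union_empty]
      exact hmatch M₁ u hm1
  have hdeg : ∀ u : V, (H'.filter (fun f => u ∈ f)).card ≤ 2 + (if u ∈ R then k else 0) := by
    intro u
    have hsubfil : H'.filter (fun f => u ∈ f) ⊆ H.filter (fun f => u ∈ f) :=
      Finset.filter_subset_filter _ hsub
    by_cases hu : u ∈ R
    · rw [if_pos hu]
      have hstep : H.filter (fun f => u ∈ f)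
          ⊆ Finset.univ.biUnion (fun j => (Hs j).filter (fun f => u ∈ f)) := by
        intro g hgg
        rw [Finset.mem_filter] at hgg
        have := hgg.1
        rw [hHeq] at this
        obtain ⟨j, -, hj⟩ := Finset.mem_biUnion.mp this
        exact Finset.mem_biUnion.mpr ⟨j, Finset.mem_univ j,
          Finset.mem_filter.mpr ⟨hj, hgg.2⟩⟩
      calc (H'.filter (fun f => u ∈ f)).card
          ≤ (Finset.univ.biUnion (fun j => (Hs j).filter (fun f => u ∈ f))).card :=
            Finset.card_le_card (hsubfil.trans hstep)
        _ ≤ ∑ j : Fin (k - 1), ((Hs j).filter (fun f => u ∈ f)).card :=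
            Finset.card_biUnion_le
        _ ≤ ∑ _j : Fin (k - 1), 1 :=
            Finset.sum_le_sum (fun j _ => (habsdeg j u).2 hu)
        _ ≤ 2 + k := by
            rw [Finset.sum_const, smul_eq_mul, mul_one, Finset.card_univ, Fintype.card_fin]
            omega
    · rw [if_neg hu]
      rcases Finset.eq_empty_or_nonempty (H'.filter (fun f => u ∈ f)) with h | h
      · simp [h]
      · obtain ⟨g₀, hg₀⟩ := h
        rw [Finset.mem_filter] at hg₀
        have hg₀H := hsub hg₀.1
        rw [hHeq] at hg₀H
        obtain ⟨j₀, -, hj₀⟩ := Finset.mem_biUnion.mp hg₀H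
        have huA : u ∈ A j₀ := ((habs j₀).2.1 g₀ hj₀).2 hg₀.2
        have hsub2 : H'.filter (fun f => u ∈ f) ⊆ (Hs j₀).filter (fun f => u ∈ f) := by
          intro g hgg
          rw [Finset.mem_filter] at hgg ⊢
          have hgH := hsub hgg.1
          rw [hHeq] at hgH
          obtain ⟨j, -, hj⟩ := Finset.mem_biUnion.mp hgH
          have huA' : u ∈ A j := ((habs j).2.1 g hj).2 hgg.2
          rcases eq_or_ne j j₀ with rfl | hne'
          · exact ⟨hj, hgg.2⟩
          · exact absurd (hdisjA j j₀ hne' u huA' huA) hu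
        have := (Finset.card_le_card hsub2).trans (habsdeg j₀ u).1
        omega
  -- double counting
  have hflip : ∑ f ∈ H', f.card = ∑ u ∈ H'.sup id, (H'.filter (fun f => u ∈ f)).card := by
    simp_rw [Finset.card_filter]
    rw [Finset.sum_comm]
    refine Finset.sum_congr rfl fun f hf => ?_
    have hfeq : (H'.sup id).filter (fun u => u ∈ f) = f := by
      rw [Finset.filter_mem_eq_inter]
      exact Finset.inter_eq_right.mpr (Finset.le_sup (f := id) hf)
    have hkey : (∑ u ∈ H'.sup id, if u ∈ f then 1 else 0) = f.card := by
      rw [← Finset.card_filter]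
      rw [hfeq]
    first
      | exact hkey
      | exact hkey.symm
  have hsum : k * e = ∑ u ∈ H'.sup id, (H'.filter (fun f => u ∈ f)).card := by
    rw [← hflip, Finset.sum_congr rfl hunif, Finset.sum_const, smul_eq_mul, mul_comm]
  have hcount : k * e ≤ 2 * v + k * k := by
    rw [hsum]
    calc ∑ u ∈ H'.sup id, (H'.filter (fun f => u ∈ f)).card
        ≤ ∑ u ∈ H'.sup id, (2 + if u ∈ R then k else 0) :=
          Finset.sum_le_sum fun u _ => hdeg u
      _ = 2 * v + ∑ u ∈ H'.sup id, (if u ∈ R then k else 0) := by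
          rw [Finset.sum_add_distrib, Finset.sum_const, smul_eq_mul, mul_comm]
      _ ≤ 2 * v + k * k := by
          have h1 : ∑ u ∈ H'.sup id, (if u ∈ R then k else 0)
              = ∑ u ∈ (H'.sup id) ∩ R, k := Finset.sum_ite_mem _ _ _
          have h2 : ((H'.sup id) ∩ R).card ≤ k := by
            calc ((H'.sup id) ∩ R).card ≤ R.card :=
                  Finset.card_le_card (Finset.inter_subset_right)
              _ ≤ Finset.univ.card := Finset.card_image_le
              _ = k := by rw [Finset.card_univ, Fintype.card_fin]
          rw [h1, Finset.sum_const, smul_eq_mul]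
          have : ((H'.sup id) ∩ R).card * k ≤ k * k := Nat.mul_le_mul_right k h2
          omega
  -- real arithmetic setup
  have hkR : (0 : ℝ) < (k : ℝ) := by
    have : (0 : ℕ) < k := by omega
    exact_mod_cast this
  have hvpos : (0 : ℝ) < (v : ℝ) - (k : ℝ) := by
    rw [sub_pos]
    exact_mod_cast hv
  have hepos : 1 ≤ e := Finset.card_pos.mpr hne
  rw [div_le_iff₀ hvpos]
  by_cases hcase : e < k + 3 + c
  · -- small case: use the forest bound
    have hforest : k * e + 1 ≤ v + e :=
      forest_bound H (k + 3 + c) k hgirth e H' rfl hsub hcase hunif hne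
    have hA : (k : ℝ) * e + 1 ≤ (v : ℝ) + e := by exact_mod_cast hforest
    have hB : (2 : ℝ) ≤ (k : ℝ) := by exact_mod_cast hk2
    have hC : (1 : ℝ) ≤ (e : ℝ) := by exact_mod_cast hepos
    have hD : (k : ℝ) + 1 ≤ (v : ℝ) := by exact_mod_cast hv
    have h1 : (k : ℝ) * ((e : ℝ) - 1) ≤ 2 * ((v : ℝ) - (k : ℝ)) := by
      nlinarith [mul_nonneg (sub_nonneg.mpr hB) (sub_nonneg.mpr hC)]
    calc (e : ℝ) - 1 ≤ (2 / (k : ℝ)) * ((v : ℝ) - (k : ℝ)) := by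
          rw [div_mul_eq_mul_div, le_div_iff₀ hkR]
          nlinarith [h1]
      _ ≤ (2 / (k : ℝ) + η) * ((v : ℝ) - (k : ℝ)) := by
          nlinarith [hvpos, hη]
  · -- large case: counting bound
    push_neg at hcase
    have hby : k * (k + 3 + c) ≤ 2 * v + k * k :=
      le_trans (Nat.mul_le_mul_left k hcase) hcount
    have hexp : k * (k + 3 + c) = k * k + 3 * k + k * c := by ring
    have hkc : 2 * c ≤ k * c := Nat.mul_le_mul_right c hk2
    have hvc : k + c + 1 ≤ v := by omega
    have hcR : ((k : ℝ) + 1) / η ≤ (c : ℝ) := Nat.le_ceil _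
    have hXc : ((k : ℝ) + 1) / η ≤ (v : ℝ) - (k : ℝ) := by
      have h3 : ((k : ℕ) : ℝ) + (c : ℝ) + 1 ≤ (v : ℝ) := by exact_mod_cast hvc
      linarith
    have hkv : (k : ℝ) + 1 ≤ η * ((v : ℝ) - (k : ℝ)) := by
      rw [div_le_iff₀ hη] at hXc
      linarith [mul_comm η ((v : ℝ) - (k : ℝ))]
    have hA : (k : ℝ) * (e : ℝ) ≤ 2 * (v : ℝ) + (k : ℝ) * (k : ℝ) := by
      exact_mod_cast hcount
    have hmain : (k : ℝ) * ((e : ℝ) - 1)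
        ≤ 2 * ((v : ℝ) - (k : ℝ)) + (k : ℝ) * (η * ((v : ℝ) - (k : ℝ))) := by
      nlinarith [hkv, hkR]
    rw [show (2 / (k : ℝ) + η) * ((v : ℝ) - (k : ℝ))
        = (2 * ((v : ℝ) - (k : ℝ)) + (k : ℝ) * (η * ((v : ℝ) - (k : ℝ)))) / (k : ℝ) from by
      field_simp]
    rw [le_div_iff₀ hkR]
    nlinarith [hmain]


end DiracRandom
end
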